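/- Let X = {x, y} and P = {p, q}, and let α_x : P^N → P be any unanimous elementary CAF (i.e., α_x(p,...,p) = p and α_x(q,...,q) = q). Then an elementary CAF α_y : P^N → P is such that the pair (α_x, α_y) defines a unanimous and independent classification aggregation function (assigning to each profile c the map sending x to α_x((c_i(x))_i) and y to α_y((c_i(y))_i), which must be surjective onto P for every profile) if and only if α_y(r) = ¬α_x(¬r) for all r ∈ P^N, where ¬ swaps p and q and ¬r = (¬r_1, ..., ¬r_n). -/

import Mathlib

/-- A classification: a surjective mapping from objects `X` to categories `P`. -/
abbrev Classif (X P : Type) : Type := {c : X → P // Function.Surjective c}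

/-- A profile of classifications, one per individual in `Fin n`. -/
abbrev Profile (n : ℕ) (X P : Type) : Type := Fin n → Classif X P

/-- A CAF is independent if the aggregate category of an object only depends on the
categories the individuals put that object in. -/
def Independent {n : ℕ} {X P : Type} (α : Profile n X P → Classif X P) : Prop :=
  ∀ (x : X) (c c' : Profile n X P),
    (∀ i, (c i).1 x = (c' i).1 x) → (α c).1 x = (α c').1 x

/-- A CAF is citizen sovereign if any object can be classified in any category. -/
def CitizenSovereign {n : ℕ} {X P : Type} (α : Profile n X P → Classif X P) : Prop :=
  ∀ (x : X) (p : P), ∃ c : Profile n X P, (α c).1 x = p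

/-- A CAF is unanimous if it maps every constant profile `(c, …, c)` to `c`. -/
def Unanimous {n : ℕ} {X P : Type} (α : Profile n X P → Classif X P) : Prop :=
  ∀ c : Classif X P, (α (fun _ => c)).1 = c.1

/-- A CAF satisfies generalized unanimity if there is a permutation `π` of `P` with
`α(c, …, c) = π ∘ c` for every classification `c`. -/
def GeneralizedUnanimity {n : ℕ} {X P : Type} (α : Profile n X P → Classif X P) : Prop :=
  ∃ π : Equiv.Perm P, ∀ c : Classif X P, (α (fun _ => c)).1 = π ∘ c.1

/-- A CAF is essentially a dictatorship if there are an individual `d` and a permutation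
`π` of `P` such that `α(c) = π ∘ c_d` for every profile `c`. -/
def EssentiallyDictatorship {n : ℕ} {X P : Type} (α : Profile n X P → Classif X P) : Prop :=
  ∃ (d : Fin n) (π : Equiv.Perm P), ∀ c : Profile n X P, (α c).1 = π ∘ (c d).1

/-- A CAF is a dictatorship if there is an individual `d` such that `α(c) = c_d`
for every profile `c`. -/
def Dictatorship {n : ℕ} {X P : Type} (α : Profile n X P → Classif X P) : Prop :=
  ∃ d : Fin n, ∀ c : Profile n X P, (α c).1 = (c d).1

/-- **Proposition 1 (iff form).** Let `X = {x, y}` and `P = {p, q}`, and let `αx` be a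
unanimous elementary CAF. Then `αy` induces (together with `αx`) a unanimous and
independent CAF iff `αy r = ¬ (αx (¬ r))` for all `r`, where `¬` swaps `p` and `q`. -/
theorem pair_induces_unanimous_independent_caf_iff
    {n : ℕ} (hn : 2 ≤ n)
    (X P : Type) [Fintype X] [Fintype P] [DecidableEq X] [DecidableEq P]
    (hX : Fintype.card X = 2) (hP : Fintype.card P = 2)
    (x y : X) (hxy : x ≠ y) (p q : P) (hpq : p ≠ q)
    (αx αy : (Fin n → P) → P)
    (hx1 : αx (fun _ => p) = p) (hx2 : αx (fun _ => q) = q) :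
    (∃ α : Profile n X P → Classif X P,
        (∀ c : Profile n X P, (α c).1 = fun z =>
          if z = x then αx (fun i => (c i).1 x) else αy (fun i => (c i).1 y)) ∧
        Unanimous α ∧ Independent α) ↔
      ∀ r : Fin n → P, αy r = Equiv.swap p q (αx (fun i => Equiv.swap p q (r i))) := by

  classical
  -- Every element of a 2-element fintype is one of two given distinct elements.
  have hPmem : ∀ a : P, a = p ∨ a = q := by
    intro a
    have h : ({p, q} : Finset P) = Finset.univ := by
      apply Finset.eq_univ_of_card
      rw [hP, Finset.card_insert_of_notMem (by simpa using hpq), Finset.card_singleton]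
    have ha : a ∈ ({p, q} : Finset P) := h ▸ Finset.mem_univ a
    simpa using ha
  have hXmem : ∀ z : X, z = x ∨ z = y := by
    intro z
    have h : ({x, y} : Finset X) = Finset.univ := by
      apply Finset.eq_univ_of_card
      rw [hX, Finset.card_insert_of_notMem (by simpa using hxy), Finset.card_singleton]
    have hz : z ∈ ({x, y} : Finset X) := h ▸ Finset.mem_univ z
    simpa using hz
  have hne_swap : ∀ a b : P, a ≠ b → b = Equiv.swap p q a := by
    intro a b hab
    rcases hPmem a with rfl | rfl <;> rcases hPmem b with rfl | rfl <;> simp_all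
  have hcne : ∀ c : Classif X P, c.1 x ≠ c.1 y := by
    intro c h
    obtain ⟨z1, h1⟩ := c.2 p
    obtain ⟨z2, h2⟩ := c.2 q
    apply hpq
    rcases hXmem z1 with rfl | rfl <;> rcases hXmem z2 with rfl | rfl <;>
      simp_all
  have hc_y : ∀ c : Classif X P, c.1 y = Equiv.swap p q (c.1 x) :=
    fun c => hne_swap _ _ (hcne c)
  constructor
  · rintro ⟨α, hform, -, -⟩ r
    have hsurj : ∀ i : Fin n,
        Function.Surjective (fun z : X => if z = x then Equiv.swap p q (r i) else r i) := by
      intro i a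
      by_cases h : a = r i
      · exact ⟨y, by simp [if_neg (Ne.symm hxy), h]⟩
      · refine ⟨x, ?_⟩
        simp only [if_pos rfl]
        exact (hne_swap (r i) a (fun e => h e.symm)).symm
    set c : Profile n X P := fun i => ⟨_, hsurj i⟩ with hc
    have hx' : (α c).1 x = αx (fun i => Equiv.swap p q (r i)) := by
      rw [hform]; simp [hc]
    have hy' : (α c).1 y = αy r := by
      rw [hform]; simp [hc, if_neg (Ne.symm hxy), if_neg hxy]
    have := hne_swap _ _ (hcne (α c))
    rw [hx', hy'] at this
    exact this
  · intro hrel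
    have key : ∀ c : Profile n X P,
        αy (fun i => (c i).1 y) = Equiv.swap p q (αx (fun i => (c i).1 x)) := by
      intro c
      rw [hrel]
      congr 2
      funext i
      rw [hc_y (c i), Equiv.swap_apply_self]
    have hsurj : ∀ c : Profile n X P,
        Function.Surjective (fun z : X =>
          if z = x then αx (fun i => (c i).1 x) else αy (fun i => (c i).1 y)) := by
      intro c a
      by_cases h : a = αx (fun i => (c i).1 x)
      · exact ⟨x, by simp [h]⟩
      · refine ⟨y, ?_⟩
        simp only [if_neg (Ne.symm hxy)]
        rw [key c]
        exact (hne_swap _ _ (fun e => h e.symm)).symm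
    refine ⟨fun c => ⟨_, hsurj c⟩, fun c => rfl, ?_, ?_⟩
    · intro c
      funext z
      rcases hXmem z with rfl | rfl
      · simp only [if_pos rfl]
        rcases hPmem (c.1 z) with h | h <;> rw [h] <;> [exact hx1; exact hx2]
      · simp only [if_neg (Ne.symm hxy)]
        rw [key (fun _ => c), hc_y c]
        congr 1
        rcases hPmem (c.1 x) with h | h <;> rw [h] <;> [exact hx1; exact hx2]
    · intro z c c' h
      rcases hXmem z with rfl | rfl
      · simp only [if_pos rfl]
        exact congrArg αx (funext fun i => h i)
      · simp only [if_neg (Ne.symm hxy)]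
        exact congrArg αy (funext fun i => h i)
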